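/- Let Q_n(x) be the descent polynomial over permutations of the multiset {1,1,2,2,...,n,n,n+1}. Then Q_n(x) = (1 + 2nx) P_n(x) + x(1-x) P_n'(x), where P_n(x) is the descent polynomial over permutations of {1,1,...,n,n}. -/

import Mathlib

open Polynomial

/-- Number of descents of a word. -/
def des (l : List ℤ) : ℕ := ((l.zip l.tail).filter (fun p => p.2 < p.1)).length

/-- Type-B descents: prepend 0. -/
def desB (l : List ℤ) : ℕ := des (0 :: l)

/-- The multiset {1,1,2,2,...,n,n} as a list. -/
def baseList (n : ℕ) : List ℤ := (List.range n).flatMap (fun i => [(i : ℤ) + 1, (i : ℤ) + 1])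

/-- All distinct arrangements (multiset permutations) of a list. -/
def arrangements (l : List ℤ) : List (List ℤ) := l.permutations.dedup

/-- Descent polynomial over arrangements of `l`. -/
noncomputable def desPoly (l : List ℤ) : Polynomial ℝ :=
  ((arrangements l).map (fun w => (X : Polynomial ℝ) ^ des w)).sum

noncomputable def Ppoly (n : ℕ) : Polynomial ℝ := desPoly (baseList n)

noncomputable def Qpoly (n : ℕ) : Polynomial ℝ := desPoly (baseList n ++ [(n : ℤ) + 1])

/-- All signings of a word. -/
def signings : List ℤ → List (List ℤ)
  | [] => [[]]
  | a :: t => (signings t).flatMap (fun w => [a :: w, (-a) :: w])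

/-- All signed permutations of the multiset given by `l`. -/
def signedWords (l : List ℤ) : List (List ℤ) := (arrangements l).flatMap signings

noncomputable def SpolyB (n : ℕ) : Polynomial ℝ :=
  ((signedWords (baseList n)).map (fun w => (X : Polynomial ℝ) ^ desB w)).sum

/-- Signed permutations of {1,1,...,n,n,n+1} in which n+1 carries a plus sign. -/
def Dwords (n : ℕ) : List (List ℤ) :=
  (signedWords (baseList n ++ [(n : ℤ) + 1])).filter (fun w => ((n : ℤ) + 1) ∈ w)

noncomputable def TpolyB (n : ℕ) : Polynomial ℝ :=
  ((Dwords n).map (fun w => (X : Polynomial ℝ) ^ desB w)).sum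

def PcountZ (n : ℕ) (k : ℤ) : ℕ :=
  ((arrangements (baseList n)).filter (fun w => (des w : ℤ) = k)).length

def QcountN (n : ℕ) (k : ℕ) : ℕ :=
  ((arrangements (baseList n ++ [(n : ℤ) + 1])).filter (fun w => des w = k)).length

def ScountZ (n : ℕ) (k : ℤ) : ℕ :=
  ((signedWords (baseList n)).filter (fun w => (desB w : ℤ) = k)).length

def TcountZ (n : ℕ) (k : ℤ) : ℕ :=
  ((Dwords n).filter (fun w => (desB w : ℤ) = k)).length


-- basic des lemmas
lemma des_nil : des ([] : List ℤ) = 0 := rfl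
lemma des_singleton (a : ℤ) : des [a] = 0 := rfl

lemma des_cons (a b : ℤ) (t : List ℤ) :
    des (a :: b :: t) = des (b :: t) + (if b < a then 1 else 0) := by
  simp only [des, List.zip, List.tail]
  by_cases h : b < a <;> simp [List.filter_cons, h, List.zipWith]

lemma des_le (l : List ℤ) : des l ≤ l.length := by
  calc des l ≤ (l.zip l.tail).length := List.length_filter_le _ _
  _ ≤ l.length := by simp [List.length_zip]



lemma insert_sum (m : ℤ) : ∀ (w : List ℤ), (∀ x ∈ w, x < m) →
    ∑ i ∈ Finset.range (w.length + 1), (X : Polynomial ℝ) ^ des (w.insertIdx i m)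
      = (des w + 1) • (X : Polynomial ℝ) ^ des w
        + (w.length - des w) • (X : Polynomial ℝ) ^ (des w + 1)
  | [], _ => by simp [des]
  | [a], h => by
    have ha : a < m := h a (by simp)
    have h1 : des [a, m] = 0 := by
      simp [des_cons, des_singleton, not_lt.2 ha.le]
    have h2 : des [m, a] = 1 := by
      simp [des_cons, des_singleton, ha]
    simp [Finset.sum_range_succ, h1, h2, des_singleton]
    ring
  | a :: b :: t, h => by
    have ha : a < m := h a (by simp)
    have hb : b < m := h b (by simp)
    have ih := insert_sum m (b :: t) (fun x hx => h x (List.mem_cons_of_mem a hx))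
    have hdmu : des (m :: b :: t) = des (b :: t) + 1 := by rw [des_cons, if_pos hb]
    have hdmau : des (m :: a :: b :: t) = des (a :: b :: t) + 1 := by
      rw [des_cons, if_pos ha]
    have hdamu : des (a :: m :: b :: t) = des (b :: t) + 1 := by
      rw [des_cons, if_neg (not_lt.2 ha.le), hdmu]
    rw [show (a :: b :: t).length + 1 = ((b :: t).length + 1) + 1 from rfl,
      Finset.sum_range_succ']
    simp only [List.insertIdx_zero, List.insertIdx_succ_cons]
    rw [Finset.sum_range_succ']
    simp only [List.insertIdx_zero, List.insertIdx_succ_cons]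
    rw [Finset.sum_range_succ'] at ih
    simp only [List.insertIdx_zero, List.insertIdx_succ_cons, hdmu] at ih
    have key := eq_sub_of_add_eq ih
    have hins : ∀ i, des (a :: b :: (t.insertIdx i m))
        = des (b :: t.insertIdx i m) + (if b < a then 1 else 0) :=
      fun i => des_cons a b _
    simp only [hins, pow_add]
    rw [← Finset.sum_mul, key, hdmau, hdamu, des_cons a b t]
    have hk1 : des (b :: t) ≤ t.length + 1 := by simpa using des_le (b :: t)
    obtain ⟨d, hd⟩ := Nat.exists_eq_add_of_le hk1
    simp only [List.length_cons, hd]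
    by_cases hba : b < a
    · simp only [if_pos hba, Nat.add_sub_cancel_left,
        show des (b :: t) + d + 1 - (des (b :: t) + 1) = d from by omega, nsmul_eq_mul]
      push_cast
      ring
    · simp only [if_neg hba, Nat.add_sub_cancel_left, Nat.add_zero,
        show des (b :: t) + d + 1 - des (b :: t) = d + 1 from by omega, nsmul_eq_mul]
      push_cast
      ring

lemma insertIdx_erase (m : ℤ) : ∀ (w : List ℤ), m ∈ w →
    (w.erase m).insertIdx (w.idxOf m) m = w
  | a :: t, hw => by
    by_cases h : a = m
    · subst h
      simp [List.idxOf_cons_self, List.insertIdx_zero]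
    · have hm : m ∈ t := by
        rcases List.mem_cons.1 hw with h' | h'
        · exact absurd h'.symm h
        · exact h'
      rw [List.erase_cons_tail (by simpa using h), List.idxOf_cons_ne _ (by simpa using h),
        List.insertIdx_succ_cons, insertIdx_erase m t hm]

lemma erase_insertIdx (m : ℤ) : ∀ (w : List ℤ) (i : ℕ), m ∉ w → i ≤ w.length →
    (w.insertIdx i m).erase m = w
  | w, 0, hm, _ => by simp [List.insertIdx_zero]
  | a :: t, i + 1, hm, hi => by
    have ham : a ≠ m := fun h => hm (h ▸ List.mem_cons_self (a := a) (l := t))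
    rw [List.insertIdx_succ_cons, List.erase_cons_tail (by simpa using ham),
      erase_insertIdx m t i (fun h => hm (List.mem_cons_of_mem a h)) (by simpa using hi)]
  | [], i + 1, hm, hi => by simp at hi

lemma indexOf_insertIdx (m : ℤ) : ∀ (w : List ℤ) (i : ℕ), m ∉ w → i ≤ w.length →
    (w.insertIdx i m).idxOf m = i
  | w, 0, hm, _ => by simp [List.insertIdx_zero]
  | a :: t, i + 1, hm, hi => by
    have ham : a ≠ m := fun h => hm (h ▸ List.mem_cons_self (a := a) (l := t))
    rw [List.insertIdx_succ_cons, List.idxOf_cons_ne _ (by simpa using ham),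
      indexOf_insertIdx m t i (fun h => hm (List.mem_cons_of_mem a h)) (by simpa using hi)]
  | [], i + 1, hm, hi => by simp at hi

lemma mem_arrangements_toFinset (l w : List ℤ) :
    w ∈ (arrangements l).toFinset ↔ w.Perm l := by
  simp [arrangements, List.mem_permutations]

lemma desPoly_eq_sum (l : List ℤ) :
    desPoly l = ∑ w ∈ (arrangements l).toFinset, (X : Polynomial ℝ) ^ des w := by
  have hnd : (arrangements l).Nodup := List.nodup_dedup _
  rw [desPoly]
  rw [show (arrangements l).toFinset = ⟨(arrangements l : Multiset (List ℤ)), hnd⟩ from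
    Finset.ext (by simp [List.mem_toFinset, Finset.mem_mk]; exact fun a => Iff.rfl)]
  rfl

lemma desPoly_append (l : List ℤ) (m : ℤ) (hm : ∀ x ∈ l, x < m) :
    desPoly (l ++ [m]) = ∑ w ∈ (arrangements l).toFinset,
      ((des w + 1) • (X : Polynomial ℝ) ^ des w
        + (l.length - des w) • (X : Polynomial ℝ) ^ (des w + 1)) := by
  have hml : m ∉ l := fun h => lt_irrefl m (hm m h)
  rw [desPoly_eq_sum]
  have main : ∑ w' ∈ (arrangements (l ++ [m])).toFinset, (X : Polynomial ℝ) ^ des w'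
      = ∑ p ∈ (arrangements l).toFinset ×ˢ Finset.range (l.length + 1),
          (X : Polynomial ℝ) ^ des (p.1.insertIdx p.2 m) := by
    refine Finset.sum_nbij' (fun w' => (w'.erase m, w'.idxOf m))
      (fun p => p.1.insertIdx p.2 m) ?_ ?_ ?_ ?_ ?_
    · intro w' hw'
      rw [mem_arrangements_toFinset] at hw'
      have hmem : m ∈ w' := hw'.mem_iff.2 (by simp)
      simp only [Finset.mem_product, mem_arrangements_toFinset, Finset.mem_range]
      constructor
      · have := hw'.erase m
        rwa [List.erase_append_right _ hml, List.erase_cons_head, List.append_nil] at this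
      · have h1 : w'.idxOf m < w'.length := List.idxOf_lt_length_iff.2 hmem
        have h2 : w'.length = l.length + 1 := by simpa using hw'.length_eq
        omega
    · intro p hp
      rw [Finset.mem_product, mem_arrangements_toFinset, Finset.mem_range] at hp
      rw [mem_arrangements_toFinset]
      have hle : p.2 ≤ p.1.length := by
        rw [hp.1.length_eq]; omega
      exact (List.perm_insertIdx m p.1 hle).trans
        ((hp.1.cons m).trans (List.perm_append_singleton m l).symm)
    · intro w' hw'
      rw [mem_arrangements_toFinset] at hw'
      exact insertIdx_erase m w' (hw'.mem_iff.2 (by simp))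
    · intro p hp
      rw [Finset.mem_product, mem_arrangements_toFinset, Finset.mem_range] at hp
      have hmw : m ∉ p.1 := fun h => hml (hp.1.mem_iff.1 h)
      have hle : p.2 ≤ p.1.length := by rw [hp.1.length_eq]; omega
      exact Prod.ext (erase_insertIdx m p.1 p.2 hmw hle) (indexOf_insertIdx m p.1 p.2 hmw hle)
    · intro w' hw'
      rw [mem_arrangements_toFinset] at hw'
      rw [insertIdx_erase m w' (hw'.mem_iff.2 (by simp))]
  rw [main, Finset.sum_product]
  refine Finset.sum_congr rfl (fun w hw => ?_)
  rw [mem_arrangements_toFinset] at hw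
  rw [show l.length = w.length from hw.length_eq.symm]
  exact insert_sum m w (fun x hx => hm x (hw.mem_iff.1 hx))

lemma per_term (L k : ℕ) (h : k ≤ L) :
    (1 + (L : Polynomial ℝ) * X) * X ^ k
        + X * (1 - X) * derivative ((X : Polynomial ℝ) ^ k)
      = (k + 1) • (X : Polynomial ℝ) ^ k + (L - k) • (X : Polynomial ℝ) ^ (k + 1) := by
  obtain ⟨d, rfl⟩ := Nat.exists_eq_add_of_le h
  cases k with
  | zero =>
    simp [nsmul_eq_mul]
  | succ k' =>
    rw [Polynomial.derivative_X_pow]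
    simp only [Nat.add_sub_cancel_left, nsmul_eq_mul, Nat.succ_sub_one, Polynomial.C_eq_natCast]
    push_cast
    ring

lemma baseList_length (n : ℕ) : (baseList n).length = 2 * n := by
  induction n with
  | zero => rfl
  | succ k ih => simp [baseList, List.range_succ, List.flatMap_append] at ih ⊢; omega

lemma baseList_lt (n : ℕ) : ∀ x ∈ baseList n, x < (n : ℤ) + 1 := by
  intro x hx
  simp only [baseList, List.mem_flatMap, List.mem_range] at hx
  obtain ⟨i, hi, hx⟩ := hx
  simp only [List.mem_cons, List.not_mem_nil, or_false] at hx
  have : (i : ℤ) < n := by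
    simp at hi
    obtain ⟨j, hj, rfl⟩ := hi
    exact_mod_cast hj
  rcases hx with h | h <;> omega


/-- Qₙ(x) = (1 + 2nx) Pₙ(x) + x(1-x) Pₙ'(x). -/
theorem stmt8 (n : ℕ) :
    Qpoly n = (1 + 2 * (n : Polynomial ℝ) * X) * Ppoly n
      + X * (1 - X) * derivative (Ppoly n) := by
  have hQ : Qpoly n = desPoly (baseList n ++ [(n : ℤ) + 1]) := rfl
  rw [hQ, desPoly_append _ _ (baseList_lt n), Ppoly, desPoly_eq_sum, Finset.mul_sum,
    map_sum, Finset.mul_sum, ← Finset.sum_add_distrib]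
  refine Finset.sum_congr rfl (fun w hw => ?_)
  rw [mem_arrangements_toFinset] at hw
  have hk : des w ≤ (baseList n).length := by
    rw [← hw.length_eq]; exact des_le w
  have := per_term (baseList n).length (des w) hk
  rw [baseList_length] at this hk ⊢
  rw [← this]
  push_cast
  ring
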